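/- Let p be a continuous seminorm on X and let f, g : Ω → X both be p-Bochner integrable. Suppose that for every E ∈ Σ there exist a p-integral x_E of f over E and a p-integral y_E of g over E with p(x_E − y_E) = 0. Then p(f(t) − g(t)) = 0 for μ-almost every t ∈ Ω. -/

import Mathlib

open MeasureTheory Filter Topology

variable {Ω : Type*} [MeasurableSpace Ω]

/-- A measurable simple function: finitely many values and measurable fibers. -/
def IsMeasSimple {X : Type*} (s : Ω → X) : Prop :=
  (Set.range s).Finite ∧ ∀ x : X, MeasurableSet (s ⁻¹' {x})

/-- Integral of a (measurable simple) function `s` over `E`: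
`∑_{x ∈ range s} μ(E ∩ s⁻¹{x}) • x`. -/
noncomputable def simpleIntegral {X : Type*} [AddCommGroup X] [Module ℝ X]
    (μ : Measure Ω) (s : Ω → X) (E : Set Ω) : X :=
  ∑ᶠ x : X, (μ (E ∩ s ⁻¹' {x})).toReal • x

/-- `f` is `p`-strongly measurable. -/
def IsPStronglyMeasurable {X : Type*} [AddCommGroup X] [Module ℝ X]
    (μ : Measure Ω) (p : Seminorm ℝ X) (f : Ω → X) : Prop :=
  ∃ (fn : ℕ → Ω → X) (Z : Set Ω), (∀ n, IsMeasSimple (fn n)) ∧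
    MeasurableSet Z ∧ μ Z = 0 ∧
    ∀ t ∉ Z, Tendsto (fun n => p (fn n t - f t)) atTop (𝓝 0)

/-- `(fn, Z)` witnesses that `f` is `p`-Bochner integrable: conditions (i), (ii)
and (iii) of the definition of `p`-Bochner integrability. -/
def IsPBochnerWitness {X : Type*} [AddCommGroup X] [Module ℝ X]
    (μ : Measure Ω) (p : Seminorm ℝ X) (f : Ω → X) (fn : ℕ → Ω → X) (Z : Set Ω) : Prop :=
  (∀ n, IsMeasSimple (fn n)) ∧ MeasurableSet Z ∧ μ Z = 0 ∧
  (∀ t ∉ Z, Tendsto (fun n => p (fn n t - f t)) atTop (𝓝 0)) ∧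
  (∀ n, Integrable (fun t => p (fn n t - f t)) μ) ∧
  Tendsto (fun n => ∫ t, p (fn n t - f t) ∂μ) atTop (𝓝 0) ∧
  ∀ E : Set Ω, MeasurableSet E → ∃ x : X,
    Tendsto (fun n => p (x - simpleIntegral μ (fn n) E)) atTop (𝓝 0)

/-- `f` is `p`-Bochner integrable. -/
def IsPBochner {X : Type*} [AddCommGroup X] [Module ℝ X]
    (μ : Measure Ω) (p : Seminorm ℝ X) (f : Ω → X) : Prop :=
  ∃ (fn : ℕ → Ω → X) (Z : Set Ω), IsPBochnerWitness μ p f fn Z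

/-- `x` is a `p`-integral of `f` over `E`. -/
def IsPIntegral {X : Type*} [AddCommGroup X] [Module ℝ X]
    (μ : Measure Ω) (p : Seminorm ℝ X) (f : Ω → X) (E : Set Ω) (x : X) : Prop :=
  ∃ (fn : ℕ → Ω → X) (Z : Set Ω), IsPBochnerWitness μ p f fn Z ∧
    Tendsto (fun n => p (x - simpleIntegral μ (fn n) E)) atTop (𝓝 0)

/-- `f` is integrable by seminorm, with `I E` as its integral over each measurable `E`
(the vector `I E` is independent of the seminorm). -/
def IntegrableBySeminormWith {X : Type*} [AddCommGroup X] [Module ℝ X] [TopologicalSpace X]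
    (μ : Measure Ω) (f : Ω → X) (I : Set Ω → X) : Prop :=
  ∃ F : Seminorm ℝ X → ℕ → Ω → X,
    (∀ p : Seminorm ℝ X, Continuous ⇑p → ∃ Z : Set Ω,
      (∀ n, IsMeasSimple (F p n)) ∧ MeasurableSet Z ∧ μ Z = 0 ∧
      (∀ t ∉ Z, Tendsto (fun n => p (F p n t - f t)) atTop (𝓝 0)) ∧
      (∀ n, Integrable (fun t => p (F p n t - f t)) μ) ∧
      Tendsto (fun n => ∫ t, p (F p n t - f t) ∂μ) atTop (𝓝 0)) ∧
    ∀ E : Set Ω, MeasurableSet E → ∀ p : Seminorm ℝ X, Continuous ⇑p →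
      Tendsto (fun n => p (I E - simpleIntegral μ (F p n) E)) atTop (𝓝 0)

/-- `f` is integrable by seminorm. -/
def IntegrableBySeminorm {X : Type*} [AddCommGroup X] [Module ℝ X] [TopologicalSpace X]
    (μ : Measure Ω) (f : Ω → X) : Prop :=
  ∃ I : Set Ω → X, IntegrableBySeminormWith μ f I

/-- A countably additive vector measure on the measurable sets of `Ω`. -/
def IsVectorMeasureOn {X : Type*} [AddCommMonoid X] [TopologicalSpace X]
    (m : Set Ω → X) : Prop :=
  ∀ E : ℕ → Set Ω, (∀ n, MeasurableSet (E n)) → Pairwise (Function.onFun Disjoint E) →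
    Tendsto (fun N => ∑ n ∈ Finset.range N, m (E n)) atTop (𝓝 (m (⋃ n, E n)))

/-- `m` is of bounded variation: for every continuous seminorm `p`, the sums
`∑_{A ∈ π} p (m A)` over finite measurable partitions `π` of `Ω` are bounded. -/
def HasBoundedVariation {X : Type*} [AddCommGroup X] [Module ℝ X] [TopologicalSpace X]
    (m : Set Ω → X) : Prop :=
  ∀ p : Seminorm ℝ X, Continuous ⇑p → ∃ C : ℝ,
    ∀ π : Finset (Set Ω), (∀ A ∈ π, MeasurableSet A) →
      ((π : Set (Set Ω)).PairwiseDisjoint id) → ⋃₀ (π : Set (Set Ω)) = Set.univ →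
      ∑ A ∈ π, p (m A) ≤ C

/-- `m` has locally relatively compact average range: for every measurable `E` of
positive measure, the set `{ m(A)/μ(A) : A ⊆ E measurable, μ A > 0 }` is relatively
compact in `X`. -/
def HasLocRelCompactAvgRange {X : Type*} [AddCommGroup X] [Module ℝ X] [TopologicalSpace X]
    (μ : Measure Ω) (m : Set Ω → X) : Prop :=
  ∀ E : Set Ω, MeasurableSet E → 0 < μ E →
    IsCompact (closure {x : X | ∃ A : Set Ω, MeasurableSet A ∧ A ⊆ E ∧ 0 < μ A ∧
      x = (μ A).toReal⁻¹ • m A})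

/-- `X` is a `B`-locally convex space with respect to `(Ω, Σ, μ)`: every family
`(f_p)`, indexed by the continuous seminorms on `X`, of pairwise almost the same
Bochner integrable functions admits a function `f : Ω → X` with
`∫ p (f - f_p) dμ = 0` for every continuous seminorm `p`. -/
def IsBLocallyConvex (X : Type*) [AddCommGroup X] [Module ℝ X] [TopologicalSpace X]
    {Ω : Type*} [MeasurableSpace Ω] (μ : Measure Ω) : Prop :=
  ∀ F : Seminorm ℝ X → Ω → X,
    (∀ p : Seminorm ℝ X, Continuous ⇑p → IsPBochner μ p (F p)) →
    (∀ p q : Seminorm ℝ X, Continuous ⇑p → Continuous ⇑q → (∀ x, p x ≤ q x) →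
      ∃ Z : Set Ω, MeasurableSet Z ∧ μ Z = 0 ∧ ∀ t ∉ Z, p (F p t - F q t) = 0) →
    ∃ f : Ω → X, ∀ p : Seminorm ℝ X, Continuous ⇑p →
      Integrable (fun t => p (f t - F p t)) μ ∧ (∫ t, p (f t - F p t) ∂μ) = 0


set_option linter.unusedSectionVars false
section Aux
variable {Ω : Type*} [MeasurableSpace Ω] {X : Type*} [AddCommGroup X] [Module ℝ X]

lemma seminorm_sum_le (p : Seminorm ℝ X) {ι : Type*} (s : Finset ι) (f : ι → X) :
    p (∑ i ∈ s, f i) ≤ ∑ i ∈ s, p (f i) := by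
  classical
  induction s using Finset.induction with
  | empty => simp
  | insert _ _ h ih =>
    rw [Finset.sum_insert h, Finset.sum_insert h]
    exact le_trans (map_add_le_add p _ _) (by linarith)

lemma IsMeasSimple.sub {s s' : Ω → X} (hs : IsMeasSimple s) (hs' : IsMeasSimple s') :
    IsMeasSimple (fun t => s t - s' t) := by
  classical
  constructor
  · exact (hs.1.image2 (· - ·) hs'.1).subset (by
      rintro _ ⟨t, rfl⟩; exact Set.mem_image2_of_mem ⟨t, rfl⟩ ⟨t, rfl⟩)
  · intro v
    have : (fun t => s t - s' t) ⁻¹' {v}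
        = ⋃ x ∈ hs.1.toFinset, s ⁻¹' {x} ∩ s' ⁻¹' {x - v} := by
      ext t
      simp only [Set.mem_preimage, Set.mem_singleton_iff, Set.mem_iUnion,
        Set.mem_inter_iff, Set.Finite.mem_toFinset, Set.mem_range, exists_prop]
      constructor
      · intro h; exact ⟨s t, ⟨t, rfl⟩, rfl, by rw [← h]; abel⟩
      · rintro ⟨x, -, rfl, h2⟩; rw [h2]; abel
    rw [this]
    exact (hs.1.toFinset : Finset X).measurableSet_biUnion
      (fun x _ => (hs.2 x).inter (hs'.2 _))

lemma IsMeasSimple.measurable_comp {s : Ω → X} (hs : IsMeasSimple s) (q : X → ℝ) :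
    Measurable fun t => q (s t) := by
  classical
  have heq : (fun t => q (s t))
      = fun t => ∑ x ∈ hs.1.toFinset, (s ⁻¹' {x}).indicator (fun _ => q x) t := by
    funext t
    rw [Finset.sum_eq_single_of_mem (s t) (hs.1.mem_toFinset.2 ⟨t, rfl⟩)]
    · simp [Set.indicator_of_mem, Set.mem_preimage]
    · intro x _ hx
      apply Set.indicator_of_notMem
      intro h
      exact hx (Set.mem_singleton_iff.1 h).symm
  rw [heq]
  exact Finset.measurable_sum _ fun x _ => (measurable_const.indicator (hs.2 x))

lemma simpleIntegral_eq_sum (μ : Measure Ω) {s : Ω → X}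
    {T : Finset X} (hT : ∀ t, s t ∈ T) (E : Set Ω) :
    simpleIntegral μ s E = ∑ x ∈ T, (μ (E ∩ s ⁻¹' {x})).toReal • x := by
  apply finsum_eq_finset_sum_of_support_subset
  intro x hx
  by_contra hxT
  apply hx
  have : E ∩ s ⁻¹' {x} = ∅ := by
    ext t; simp only [Set.mem_inter_iff, Set.mem_preimage, Set.mem_singleton_iff,
      Set.mem_empty_iff_false, iff_false, not_and]
    intro _ h; exact hxT (h ▸ hT t)
  simp [this]

lemma measure_toReal_eq_sum_fibers (μ : Measure Ω) [IsFiniteMeasure μ] {s : Ω → X}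
    (hfib : ∀ x : X, MeasurableSet (s ⁻¹' {x})) {T : Finset X} (hT : ∀ t, s t ∈ T)
    {A : Set Ω} (hA : MeasurableSet A) :
    (μ A).toReal = ∑ x ∈ T, (μ (A ∩ s ⁻¹' {x})).toReal := by
  rw [← ENNReal.toReal_sum (fun _ _ => measure_ne_top μ _)]
  congr 1
  rw [← measure_biUnion_finset ?_ (fun x _ => hA.inter (hfib x))]
  · congr 1
    ext t
    simp only [Set.mem_iUnion, Set.mem_inter_iff, Set.mem_preimage, Set.mem_singleton_iff,
      exists_prop]
    exact ⟨fun ht => ⟨s t, hT t, ht, rfl⟩, fun ⟨x, _, ht, _⟩ => ht⟩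
  · intro x _ y _ hxy
    apply Set.disjoint_left.2
    rintro t ⟨-, (ht : s t = x)⟩ ⟨-, (ht' : s t = y)⟩
    exact hxy (ht ▸ ht' ▸ rfl)

end Aux


section Aux2
set_option linter.unusedSectionVars false
variable {Ω : Type*} [MeasurableSpace Ω] {X : Type*} [AddCommGroup X] [Module ℝ X]

lemma simpleIntegral_sub_repr (μ : Measure Ω) [IsFiniteMeasure μ] {s s' : Ω → X}
    (hs : IsMeasSimple s) (hs' : IsMeasSimple s') {E : Set Ω} (hE : MeasurableSet E)
    {T : Finset X} (hTs : ∀ t, s t ∈ T) (hTs' : ∀ t, s' t ∈ T) :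
    simpleIntegral μ s E - simpleIntegral μ s' E
      = ∑ x ∈ T, ∑ y ∈ T, (μ (E ∩ s ⁻¹' {x} ∩ s' ⁻¹' {y})).toReal • (x - y) := by
  have h1 : simpleIntegral μ s E
      = ∑ x ∈ T, ∑ y ∈ T, (μ (E ∩ s ⁻¹' {x} ∩ s' ⁻¹' {y})).toReal • x := by
    rw [simpleIntegral_eq_sum μ hTs E]
    refine Finset.sum_congr rfl fun x _ => ?_
    rw [measure_toReal_eq_sum_fibers μ hs'.2 hTs' (hE.inter (hs.2 x)), Finset.sum_smul]
  have h2 : simpleIntegral μ s' E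
      = ∑ x ∈ T, ∑ y ∈ T, (μ (E ∩ s ⁻¹' {x} ∩ s' ⁻¹' {y})).toReal • y := by
    rw [simpleIntegral_eq_sum μ hTs' E, Finset.sum_comm (γ := X)]
    refine Finset.sum_congr rfl fun y _ => ?_
    rw [measure_toReal_eq_sum_fibers μ hs.2 hTs (hE.inter (hs'.2 y)), Finset.sum_smul]
    refine Finset.sum_congr rfl fun x _ => ?_
    rw [Set.inter_right_comm]
  rw [h1, h2, ← Finset.sum_sub_distrib]
  refine Finset.sum_congr rfl fun x _ => ?_
  rw [← Finset.sum_sub_distrib]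
  exact Finset.sum_congr rfl fun y _ => (smul_sub _ _ _).symm

lemma simpleIntegral_sub_of_fiber (μ : Measure Ω) [IsFiniteMeasure μ] {s s' : Ω → X}
    (hs : IsMeasSimple s) (hs' : IsMeasSimple s') {E : Set Ω} (hE : MeasurableSet E)
    {v : X} (hv : ∀ t ∈ E, s t - s' t = v) :
    simpleIntegral μ s E - simpleIntegral μ s' E = (μ E).toReal • v := by
  classical
  set T : Finset X := (hs.1.union hs'.1).toFinset with hT
  have hTs : ∀ t, s t ∈ T := fun t => (hs.1.union hs'.1).mem_toFinset.2 (Or.inl ⟨t, rfl⟩)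
  have hTs' : ∀ t, s' t ∈ T := fun t => (hs.1.union hs'.1).mem_toFinset.2 (Or.inr ⟨t, rfl⟩)
  rw [simpleIntegral_sub_repr μ hs hs' hE hTs hTs']
  have : ∀ x ∈ T, ∀ y ∈ T, (μ (E ∩ s ⁻¹' {x} ∩ s' ⁻¹' {y})).toReal • (x - y)
      = (μ (E ∩ s ⁻¹' {x} ∩ s' ⁻¹' {y})).toReal • v := by
    intro x _ y _
    rcases Set.eq_empty_or_nonempty (E ∩ s ⁻¹' {x} ∩ s' ⁻¹' {y}) with hemp | ⟨t, ht⟩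
    · simp [hemp]
    · obtain ⟨⟨htE, hts⟩, hts'⟩ := ht
      have : x - y = v := by
        rw [← Set.mem_singleton_iff.1 hts, ← Set.mem_singleton_iff.1 hts']
        exact hv t htE
      rw [this]
  calc ∑ x ∈ T, ∑ y ∈ T, (μ (E ∩ s ⁻¹' {x} ∩ s' ⁻¹' {y})).toReal • (x - y)
      = ∑ x ∈ T, ∑ y ∈ T, (μ (E ∩ s ⁻¹' {x} ∩ s' ⁻¹' {y})).toReal • v :=
        Finset.sum_congr rfl fun x hx => Finset.sum_congr rfl fun y hy => this x hx y hy
    _ = (∑ x ∈ T, ∑ y ∈ T, (μ (E ∩ s ⁻¹' {x} ∩ s' ⁻¹' {y})).toReal) • v := by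
        rw [Finset.sum_smul]; exact Finset.sum_congr rfl fun x _ => by rw [Finset.sum_smul]
    _ = (μ E).toReal • v := by
        congr 1
        rw [measure_toReal_eq_sum_fibers μ hs.2 hTs hE]
        exact Finset.sum_congr rfl fun x _ =>
          (measure_toReal_eq_sum_fibers μ hs'.2 hTs' (hE.inter (hs.2 x))).symm

lemma seminorm_simpleIntegral_sub_le (μ : Measure Ω) [IsFiniteMeasure μ] (p : Seminorm ℝ X)
    {s s' : Ω → X} (hs : IsMeasSimple s) (hs' : IsMeasSimple s') {E : Set Ω}
    (hE : MeasurableSet E) {ρ : Ω → ℝ} (hρ : Integrable ρ μ)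
    (hle : ∀ t, p (s t - s' t) ≤ ρ t) :
    p (simpleIntegral μ s E - simpleIntegral μ s' E) ≤ ∫ t in E, ρ t ∂μ := by
  classical
  set T : Finset X := (hs.1.union hs'.1).toFinset with hT
  have hTs : ∀ t, s t ∈ T := fun t => (hs.1.union hs'.1).mem_toFinset.2 (Or.inl ⟨t, rfl⟩)
  have hTs' : ∀ t, s' t ∈ T := fun t => (hs.1.union hs'.1).mem_toFinset.2 (Or.inr ⟨t, rfl⟩)
  rw [simpleIntegral_sub_repr μ hs hs' hE hTs hTs']
  set cell : X × X → Set Ω := fun q => E ∩ s ⁻¹' {q.1} ∩ s' ⁻¹' {q.2} with hcell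
  have hcellmeas : ∀ q : X × X, MeasurableSet (cell q) :=
    fun q => (hE.inter (hs.2 q.1)).inter (hs'.2 q.2)
  have step1 : p (∑ x ∈ T, ∑ y ∈ T, (μ (E ∩ s ⁻¹' {x} ∩ s' ⁻¹' {y})).toReal • (x - y))
      ≤ ∑ x ∈ T, ∑ y ∈ T, (μ (cell (x, y))).toReal * p (x - y) := by
    refine le_trans (seminorm_sum_le p _ _) (Finset.sum_le_sum fun x _ => ?_)
    refine le_trans (seminorm_sum_le p _ _) (Finset.sum_le_sum fun y _ => ?_)
    rw [map_smul_eq_mul, Real.norm_eq_abs, abs_of_nonneg ENNReal.toReal_nonneg]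
  refine le_trans step1 ?_
  have step2 : ∀ x ∈ T, ∀ y ∈ T, (μ (cell (x, y))).toReal * p (x - y)
      ≤ ∫ t in cell (x, y), ρ t ∂μ := by
    intro x _ y _
    have hconst : ∫ t in cell (x, y), p (x - y) ∂μ = (μ (cell (x, y))).toReal * p (x - y) := by
      rw [setIntegral_const, smul_eq_mul, measureReal_def]
    rw [← hconst]
    refine setIntegral_mono_on (integrableOn_const (measure_ne_top μ _))
      (hρ.integrableOn) (hcellmeas (x, y)) ?_
    rintro t ⟨⟨-, hts⟩, hts'⟩
    have : x - y = s t - s' t := by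
      rw [Set.mem_singleton_iff.1 (Set.mem_preimage.1 hts),
        Set.mem_singleton_iff.1 (Set.mem_preimage.1 hts')]
    rw [this]; exact hle t
  refine le_trans (Finset.sum_le_sum fun x hx => Finset.sum_le_sum fun y hy => step2 x hx y hy) ?_
  have hdisj : (↑(T ×ˢ T) : Set (X × X)).Pairwise (Function.onFun Disjoint cell) := by
    intro q _ q' _ hqq'
    apply Set.disjoint_left.2
    rintro t ⟨⟨-, ht1⟩, ht2⟩ ⟨⟨-, ht1'⟩, ht2'⟩
    apply hqq'
    have e1 : q.1 = q'.1 := by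
      rw [← Set.mem_singleton_iff.1 (Set.mem_preimage.1 ht1),
        ← Set.mem_singleton_iff.1 (Set.mem_preimage.1 ht1')]
    have e2 : q.2 = q'.2 := by
      rw [← Set.mem_singleton_iff.1 (Set.mem_preimage.1 ht2),
        ← Set.mem_singleton_iff.1 (Set.mem_preimage.1 ht2')]
    exact Prod.ext e1 e2
  have hunion : (⋃ q ∈ T ×ˢ T, cell q) = E := by
    ext t
    simp only [Set.mem_iUnion, exists_prop]
    constructor
    · rintro ⟨q, -, ⟨⟨htE, -⟩, -⟩⟩; exact htE
    · intro htE
      exact ⟨(s t, s' t), Finset.mem_product.2 ⟨hTs t, hTs' t⟩, ⟨⟨htE, rfl⟩, rfl⟩⟩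
  have := integral_biUnion_finset (T ×ˢ T) (fun q _ => hcellmeas q) hdisj
    (fun q _ => hρ.integrableOn) (f := ρ) (μ := μ)
  rw [hunion] at this
  rw [← Finset.sum_product' (f := fun x y => ∫ t in cell (x, y), ρ t ∂μ), ← this]
end Aux2

section Aux3
set_option linter.unusedSectionVars false
variable {Ω : Type*} [MeasurableSpace Ω] {X : Type*} [AddCommGroup X] [Module ℝ X]

lemma star_est (μ : Measure Ω) [IsFiniteMeasure μ] (p : Seminorm ℝ X) {f g : Ω → X}
    {fn gn : ℕ → Ω → X} {Zf Zg : Set Ω}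
    (hWf : IsPBochnerWitness μ p f fn Zf) (hWg : IsPBochnerWitness μ p g gn Zg)
    (h : ∀ E : Set Ω, MeasurableSet E → ∃ x y : X,
      IsPIntegral μ p f E x ∧ IsPIntegral μ p g E y ∧ p (x - y) = 0)
    {E : Set Ω} (hE : MeasurableSet E) (n : ℕ) :
    p (simpleIntegral μ (fn n) E - simpleIntegral μ (gn n) E)
      ≤ ∫ t in E, (p (fn n t - f t) + p (gn n t - g t)) ∂μ := by
  obtain ⟨x, y, hx, hy, hxy⟩ := h E hE
  obtain ⟨fm, Zf', hWf', hxlim⟩ := hx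
  obtain ⟨gm, Zg', hWg', hylim⟩ := hy
  set A := simpleIntegral μ (fn n) E
  set B := simpleIntegral μ (gn n) E
  -- the m-indexed bound
  set Φ : ℕ → ℝ := fun m =>
    ((∫ t in E, p (fn n t - f t) ∂μ) + (∫ t, p (fm m t - f t) ∂μ))
    + p (x - simpleIntegral μ (fm m) E) + p (x - y)
    + p (y - simpleIntegral μ (gm m) E)
    + ((∫ t in E, p (gn n t - g t) ∂μ) + (∫ t, p (gm m t - g t) ∂μ)) with hΦ
  have hbound : ∀ m, p (A - B) ≤ Φ m := by
    intro m
    set A' := simpleIntegral μ (fm m) E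
    set B' := simpleIntegral μ (gm m) E
    have tri : p (A - B) ≤ p (A - A') + p (A' - x) + p (x - y) + p (y - B') + p (B' - B) := by
      have h1 : p (A - B) ≤ p (A - A') + p (A' - B) := by
        have := map_add_le_add p (A - A') (A' - B); rwa [sub_add_sub_cancel] at this
      have h2 : p (A' - B) ≤ p (A' - x) + p (x - B) := by
        have := map_add_le_add p (A' - x) (x - B); rwa [sub_add_sub_cancel] at this
      have h3 : p (x - B) ≤ p (x - y) + p (y - B) := by
        have := map_add_le_add p (x - y) (y - B); rwa [sub_add_sub_cancel] at this
      have h4 : p (y - B) ≤ p (y - B') + p (B' - B) := by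
        have := map_add_le_add p (y - B') (B' - B); rwa [sub_add_sub_cancel] at this
      linarith
    have hAA' : p (A - A')
        ≤ (∫ t in E, p (fn n t - f t) ∂μ) + (∫ t, p (fm m t - f t) ∂μ) := by
      have hρ : Integrable (fun t => p (fn n t - f t) + p (fm m t - f t)) μ :=
        (hWf.2.2.2.2.1 n).add (hWf'.2.2.2.2.1 m)
      have hle : ∀ t, p (fn n t - fm m t) ≤ p (fn n t - f t) + p (fm m t - f t) := by
        intro t
        have := map_add_le_add p (fn n t - f t) (f t - fm m t)
        rw [sub_add_sub_cancel] at this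
        rwa [map_sub_rev p (f t) (fm m t)] at this
      refine le_trans (seminorm_simpleIntegral_sub_le μ p (hWf.1 n) (hWf'.1 m) hE hρ hle) ?_
      rw [integral_add ((hWf.2.2.2.2.1 n).integrableOn) ((hWf'.2.2.2.2.1 m).integrableOn)]
      exact add_le_add le_rfl (setIntegral_le_integral (hWf'.2.2.2.2.1 m)
        (Filter.Eventually.of_forall fun t => apply_nonneg p _))
    have hBB' : p (B' - B)
        ≤ (∫ t in E, p (gn n t - g t) ∂μ) + (∫ t, p (gm m t - g t) ∂μ) := by
      have hρ : Integrable (fun t => p (gn n t - g t) + p (gm m t - g t)) μ :=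
        (hWg.2.2.2.2.1 n).add (hWg'.2.2.2.2.1 m)
      have hle : ∀ t, p (gn n t - gm m t) ≤ p (gn n t - g t) + p (gm m t - g t) := by
        intro t
        have := map_add_le_add p (gn n t - g t) (g t - gm m t)
        rw [sub_add_sub_cancel] at this
        rwa [map_sub_rev p (g t) (gm m t)] at this
      have := seminorm_simpleIntegral_sub_le μ p (hWg.1 n) (hWg'.1 m) hE hρ hle
      rw [map_sub_rev p B' B]
      refine le_trans this ?_
      rw [integral_add ((hWg.2.2.2.2.1 n).integrableOn) ((hWg'.2.2.2.2.1 m).integrableOn)]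
      exact add_le_add le_rfl (setIntegral_le_integral (hWg'.2.2.2.2.1 m)
        (Filter.Eventually.of_forall fun t => apply_nonneg p _))
    have hA'x : p (A' - x) = p (x - A') := map_sub_rev p A' x
    rw [hΦ]
    dsimp only
    rw [hA'x] at tri
    linarith
  have hΦlim : Tendsto Φ atTop
      (𝓝 ((((∫ t in E, p (fn n t - f t) ∂μ) + 0) + 0 + p (x - y) + 0)
        + ((∫ t in E, p (gn n t - g t) ∂μ) + 0))) := by
    refine Tendsto.add (Tendsto.add (Tendsto.add (Tendsto.add
      (Tendsto.add tendsto_const_nhds hWf'.2.2.2.2.2.1) hxlim) tendsto_const_nhds) hylim)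
      (Tendsto.add tendsto_const_nhds hWg'.2.2.2.2.2.1)
  have := ge_of_tendsto' hΦlim hbound
  rw [hxy] at this
  have hsplit : ∫ t in E, (p (fn n t - f t) + p (gn n t - g t)) ∂μ
      = (∫ t in E, p (fn n t - f t) ∂μ) + ∫ t in E, p (gn n t - g t) ∂μ :=
    integral_add ((hWf.2.2.2.2.1 n).integrableOn) ((hWg.2.2.2.2.1 n).integrableOn)
  rw [hsplit]
  linarith
end Aux3

variable {X : Type*} [AddCommGroup X] [Module ℝ X] [TopologicalSpace X]
  [IsTopologicalAddGroup X] [ContinuousSMul ℝ X] [LocallyConvexSpace ℝ X] [T2Space X]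
/-- if `p` is a continuous seminorm, `f` and `g` are `p`-Bochner
integrable and for every measurable set `E` there exist a `p`-integral `x_E` of
`f` over `E` and a `p`-integral `y_E` of `g` over `E` with `p (x_E - y_E) = 0`,
then `p (f t - g t) = 0` for `μ`-a.e. `t`. -/
theorem stmt14 (μ : Measure Ω) [IsFiniteMeasure μ] [μ.IsComplete]
    (p : Seminorm ℝ X) (hp : Continuous ⇑p) (f g : Ω → X)
    (hf : IsPBochner μ p f) (hg : IsPBochner μ p g)
    (h : ∀ E : Set Ω, MeasurableSet E → ∃ x y : X,
      IsPIntegral μ p f E x ∧ IsPIntegral μ p g E y ∧ p (x - y) = 0) :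
    ∀ᵐ t ∂μ, p (f t - g t) = 0 := by
  classical
  obtain ⟨fn, Zf, hWf⟩ := hf
  obtain ⟨gn, Zg, hWg⟩ := hg
  set N := Zf ∪ Zg with hNdef
  have hNmeas : MeasurableSet N := hWf.2.1.union hWg.2.1
  have hN0 : μ N = 0 := measure_union_null hWf.2.2.1 hWg.2.2.1
  set ρ : ℕ → Ω → ℝ := fun n t => p (fn n t - f t) + p (gn n t - g t) with hρdef
  have hρint : ∀ n, Integrable (ρ n) μ := fun n => (hWf.2.2.2.2.1 n).add (hWg.2.2.2.2.1 n)
  have hρnonneg : ∀ n t, 0 ≤ ρ n t := fun n t =>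
    add_nonneg (apply_nonneg p _) (apply_nonneg p _)
  have hρlim : Tendsto (fun n => ∫ t, ρ n t ∂μ) atTop (𝓝 0) := by
    have heq : (fun n => ∫ t, ρ n t ∂μ)
        = fun n => (∫ t, p (fn n t - f t) ∂μ) + ∫ t, p (gn n t - g t) ∂μ := by
      funext n; exact integral_add (hWf.2.2.2.2.1 n) (hWg.2.2.2.2.1 n)
    rw [heq]
    simpa using hWf.2.2.2.2.2.1.add hWg.2.2.2.2.2.1
  have hhd : ∀ n, IsMeasSimple (fun t => fn n t - gn n t) :=
    fun n => (hWf.1 n).sub (hWg.1 n)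
  have hdle : ∀ n t, p (f t - g t) ≤ ρ n t + p (fn n t - gn n t) := by
    intro n t
    have h1 := map_add_le_add p (f t - fn n t) (fn n t - g t)
    rw [sub_add_sub_cancel] at h1
    have h2 := map_add_le_add p (fn n t - gn n t) (gn n t - g t)
    rw [sub_add_sub_cancel] at h2
    have e1 : p (f t - fn n t) = p (fn n t - f t) := map_sub_rev p _ _
    have := hρnonneg n t
    simp only [hρdef]
    linarith
  have hdiff_le : ∀ n t, p ((fn n t - gn n t) - (f t - g t)) ≤ ρ n t := by
    intro n t
    have heq : (fn n t - gn n t) - (f t - g t) = (fn n t - f t) - (gn n t - g t) := by abel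
    rw [heq, sub_eq_add_neg]
    refine le_trans (map_add_le_add p _ _) ?_
    rw [map_neg_eq_map]
  set u : Ω → ℝ := fun t => if t ∈ N then 0 else p (f t - g t) with hudef
  have humeas : Measurable u := by
    refine measurable_of_tendsto_metrizable' atTop
      (f := fun n t => if t ∈ N then 0 else p (fn n t - gn n t))
      (fun n => Measurable.ite hNmeas measurable_const ((hhd n).measurable_comp ⇑p)) ?_
    rw [tendsto_pi_nhds]
    intro t
    by_cases ht : t ∈ N
    · simp [ht, hudef]
    · simp only [if_neg ht, hudef]
      rw [← tendsto_sub_nhds_zero_iff]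
      have hρt : Tendsto (fun n => ρ n t) atTop (𝓝 0) := by
        have h1 := hWf.2.2.2.1 t (fun hh => ht (Or.inl hh))
        have h2 := hWg.2.2.2.1 t (fun hh => ht (Or.inr hh))
        simpa using h1.add h2
      refine squeeze_zero_norm (fun n => ?_) hρt
      rw [Real.norm_eq_abs, abs_sub_le_iff]
      constructor
      · have h1 := map_add_le_add p ((fn n t - gn n t) - (f t - g t)) (f t - g t)
        rw [sub_add_cancel] at h1
        linarith [hdiff_le n t]
      · have h1 := map_add_le_add p ((f t - g t) - (fn n t - gn n t)) (fn n t - gn n t)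
        rw [sub_add_cancel] at h1
        have h2 : p ((f t - g t) - (fn n t - gn n t)) ≤ ρ n t := by
          rw [map_sub_rev]; exact hdiff_le n t
        linarith
  have key : ∀ ε : ℝ, 0 < ε → μ {t | ε < u t} = 0 := by
    intro ε hε
    by_contra hS0
    set S := {t | ε < u t} with hSdef
    have hSmeas : MeasurableSet S := measurableSet_lt measurable_const humeas
    set a := (μ S).toReal with hadef
    have ha0 : 0 < a := ENNReal.toReal_pos hS0 (measure_ne_top μ S)
    have hev : ∀ᶠ n in atTop, ∫ t, ρ n t ∂μ < ε * a / 8 :=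
      (tendsto_order.1 hρlim).2 (ε * a / 8) (by positivity)
    obtain ⟨n, hn⟩ := hev.exists
    have hae : AEMeasurable (ρ n) μ := (hρint n).1.aemeasurable
    set ρ' := hae.mk (ρ n) with hρ'def
    have hρ'meas : Measurable ρ' := hae.measurable_mk
    have hρ'ae : ρ n =ᵐ[μ] ρ' := hae.ae_eq_mk
    set D := {t | ρ n t ≠ ρ' t} with hDdef
    have hD0 : μ D = 0 := ae_iff.1 hρ'ae
    have hDmeas : MeasurableSet D := measurableSet_of_null hD0
    set M := {t | ε/2 ≤ ρ' t} with hMdef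
    have hMmeas : MeasurableSet M := measurableSet_le measurable_const hρ'meas
    set B := (S \ M) \ D with hBdef
    have hBmeas : MeasurableSet B := (hSmeas.diff hMmeas).diff hDmeas
    have hρ'int : Integrable ρ' μ := (hρint n).congr hρ'ae
    have hρ'nn : 0 ≤ᵐ[μ] ρ' := hρ'ae.mono fun t ht => ht ▸ hρnonneg n t
    have hmark := mul_meas_ge_le_integral_of_nonneg hρ'nn hρ'int (ε/2)
    have hint_eq : ∫ t, ρ' t ∂μ = ∫ t, ρ n t ∂μ := integral_congr_ae hρ'ae.symm
    have hM4 : (μ M).toReal ≤ a/4 := by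
      have h1 : (ε/2) * (μ M).toReal ≤ ∫ t, ρ n t ∂μ := by
        rw [← hint_eq]; exact hmark
      nlinarith [ENNReal.toReal_nonneg (a := μ M)]
    have hcover : S ⊆ B ∪ M ∪ D := by
      intro t htS
      by_cases htD : t ∈ D
      · exact Or.inr htD
      by_cases htM : t ∈ M
      · exact Or.inl (Or.inr htM)
      · exact Or.inl (Or.inl ⟨⟨htS, htM⟩, htD⟩)
    have hSle : μ S ≤ μ B + μ M := by
      calc μ S ≤ μ (B ∪ M ∪ D) := measure_mono hcover
        _ ≤ μ (B ∪ M) + μ D := measure_union_le _ _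
        _ = μ (B ∪ M) := by rw [hD0, add_zero]
        _ ≤ μ B + μ M := measure_union_le _ _
    have hBlow : a/2 ≤ (μ B).toReal := by
      have h1 : (μ S).toReal ≤ (μ B).toReal + (μ M).toReal := by
        rw [← ENNReal.toReal_add (measure_ne_top μ B) (measure_ne_top μ M)]
        exact ENNReal.toReal_mono (by finiteness) hSle
      linarith
    have hBpt : ∀ t ∈ B, ε/2 ≤ p (fn n t - gn n t) := by
      rintro t ⟨⟨htS, htM⟩, htD⟩
      have hρeq : ρ n t = ρ' t := not_not.1 htD
      have hρle : ρ n t ≤ ε/2 := by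
        rw [hρeq]
        exact le_of_not_ge htM
      have htN : t ∉ N := by
        intro hN
        have : u t = 0 := if_pos hN
        rw [hSdef] at htS
        simp only [Set.mem_setOf_eq, this] at htS
        linarith
      have hut : ε < p (f t - g t) := by
        have := htS
        rw [hSdef] at this
        simp only [Set.mem_setOf_eq, hudef, if_neg htN] at this
        exact this
      have h5 := hdle n t
      have h7 : ε < ρ n t + p (fn n t - gn n t) := lt_of_lt_of_le hut h5
      have h8 : ε < ε/2 + p (fn n t - gn n t) :=
        lt_of_lt_of_le h7 (add_le_add_left hρle _)
      have h9 : ε - ε/2 < p (fn n t - gn n t) := sub_lt_iff_lt_add'.2 h8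
      have h10 : ε/2 = ε - ε/2 := by ring
      rw [h10]
      exact le_of_lt h9
    set hd : Ω → X := fun t => fn n t - gn n t with hhddef
    set T := (hhd n).1.toFinset with hTdef
    have hTmem : ∀ t, hd t ∈ T := fun t => (hhd n).1.mem_toFinset.2 ⟨t, rfl⟩
    set cellv : X → Set Ω := fun v => B ∩ hd ⁻¹' {v} with hcellvdef
    have hcellmeas : ∀ v, MeasurableSet (cellv v) := fun v => hBmeas.inter ((hhd n).2 v)
    have hdecomp : (μ B).toReal = ∑ v ∈ T, (μ (cellv v)).toReal :=
      measure_toReal_eq_sum_fibers μ (hhd n).2 hTmem hBmeas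
    have lower : ε/2 * (μ B).toReal ≤ ∑ v ∈ T, (μ (cellv v)).toReal * p v := by
      rw [hdecomp, Finset.mul_sum]
      refine Finset.sum_le_sum fun v hv => ?_
      rcases eq_or_ne (μ (cellv v)) 0 with h0 | h0
      · simp [h0]
      · obtain ⟨t, htB, htv⟩ := nonempty_of_measure_ne_zero h0
        have hv2 : ε/2 ≤ p v := by
          have h6 := hBpt t htB
          have hveq : hd t = v := htv
          rw [← hveq]
          exact h6
        have := ENNReal.toReal_nonneg (a := μ (cellv v))
        nlinarith
    have upper : ∑ v ∈ T, (μ (cellv v)).toReal * p v ≤ ∫ t, ρ n t ∂μ := by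
      have step : ∀ v ∈ T, (μ (cellv v)).toReal * p v ≤ ∫ t in cellv v, ρ n t ∂μ := by
        intro v _
        have heq : (μ (cellv v)).toReal • v
            = simpleIntegral μ (fn n) (cellv v) - simpleIntegral μ (gn n) (cellv v) :=
          (simpleIntegral_sub_of_fiber μ (hWf.1 n) (hWg.1 n) (hcellmeas v)
            (fun t ht => Set.mem_singleton_iff.1 ht.2)).symm
        have hmul : (μ (cellv v)).toReal * p v = p ((μ (cellv v)).toReal • v) := by
          rw [map_smul_eq_mul, Real.norm_eq_abs, abs_of_nonneg ENNReal.toReal_nonneg]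
        rw [hmul, heq]
        exact star_est μ p hWf hWg h (hcellmeas v) n
      refine le_trans (Finset.sum_le_sum step) ?_
      have hdisj : (↑T : Set X).Pairwise (Function.onFun Disjoint cellv) := by
        intro v _ w _ hvw
        apply Set.disjoint_left.2
        rintro t ⟨-, ht1⟩ ⟨-, ht2⟩
        exact hvw ((Set.mem_singleton_iff.1 ht1) ▸ (Set.mem_singleton_iff.1 ht2) ▸ rfl)
      have hbi := integral_biUnion_finset T (fun v _ => hcellmeas v) hdisj
        (fun v _ => (hρint n).integrableOn) (f := ρ n) (μ := μ)
      have hun : (⋃ v ∈ T, cellv v) = B := by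
        ext t
        simp only [Set.mem_iUnion, exists_prop]
        constructor
        · rintro ⟨v, -, htB, -⟩; exact htB
        · intro htB; exact ⟨hd t, hTmem t, htB, rfl⟩
      rw [← hbi, hun]
      exact setIntegral_le_integral (hρint n)
        (Filter.Eventually.of_forall fun t => hρnonneg n t)
    nlinarith [hn, le_trans lower upper, hBlow, hε, ha0]
  rw [ae_iff]
  have hsub : {t | ¬ p (f t - g t) = 0} ⊆ N ∪ ⋃ k : ℕ, {t | 1/((k:ℝ)+1) < u t} := by
    intro t ht
    by_cases htN : t ∈ N
    · exact Or.inl htN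
    · right
      have hpos : 0 < p (f t - g t) :=
        lt_of_le_of_ne (apply_nonneg p _) (Ne.symm ht)
      obtain ⟨k, hk⟩ := exists_nat_one_div_lt hpos
      exact Set.mem_iUnion.2 ⟨k, by simpa [hudef, if_neg htN] using hk⟩
  refine measure_mono_null hsub ?_
  exact measure_union_null hN0 (measure_iUnion_null fun k => key _ (by positivity))
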